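/- For a fixed matrix A ∈ ℂ^{d×d}, the map p ↦ Δ_p(A) is non-increasing and Lipschitz continuous on [2,∞). -/

import Mathlib

open Matrix

/-- `λ(A)`: the ellipticity constant, minimum over unit vectors `ξ` of `Re(Aξ · conj ξ)`. -/
noncomputable def lamConst {d : ℕ} (A : Matrix (Fin d) (Fin d) ℂ) : ℝ :=
  sInf { r : ℝ | ∃ ξ : Fin d → ℂ, (∑ i, Complex.normSq (ξ i)) = 1 ∧
    r = (A.mulVec ξ ⬝ᵥ star ξ).re }

/-- `Δ_p(A)`: the `p`-ellipticity constant. -/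
noncomputable def DeltaConst {d : ℕ} (p : ℝ) (A : Matrix (Fin d) (Fin d) ℂ) : ℝ :=
  sInf { r : ℝ | ∃ ξ : Fin d → ℂ, (∑ i, Complex.normSq (ξ i)) = 1 ∧
    r = (A.mulVec ξ ⬝ᵥ star (ξ + ((1 - 2/p : ℝ) : ℂ) • star ξ)).re }

section Aux

variable {d : ℕ} (A : Matrix (Fin d) (Fin d) ℂ)

noncomputable def fA (ξ : Fin d → ℂ) : ℝ := (A.mulVec ξ ⬝ᵥ star ξ).re
noncomputable def gA (ξ : Fin d → ℂ) : ℝ := (A.mulVec ξ ⬝ᵥ ξ).re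

lemma val_eq (ξ : Fin d → ℂ) (p : ℝ) :
    (A.mulVec ξ ⬝ᵥ star (ξ + ((1 - 2/p : ℝ) : ℂ) • star ξ)).re
      = fA A ξ + (1 - 2/p) * gA A ξ := by
  have h : star (ξ + ((1 - 2/p : ℝ) : ℂ) • star ξ)
      = star ξ + ((1 - 2/p : ℝ) : ℂ) • ξ := by
    simp [star_add, star_smul, Complex.conj_ofReal]
  rw [h, dotProduct_add, dotProduct_smul]
  simp [fA, gA, Complex.add_re, Complex.ofReal_mul]

lemma norm_I_smul (ξ : Fin d → ℂ) :
    (∑ i, Complex.normSq ((Complex.I • ξ) i)) = ∑ i, Complex.normSq (ξ i) := by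
  simp [Complex.normSq_mul]

lemma fA_I_smul (ξ : Fin d → ℂ) : fA A (Complex.I • ξ) = fA A ξ := by
  simp only [fA, Matrix.mulVec_smul, star_smul, smul_dotProduct, dotProduct_smul]
  simp [Complex.mul_re]

lemma gA_I_smul (ξ : Fin d → ℂ) : gA A (Complex.I • ξ) = - gA A ξ := by
  simp only [gA, Matrix.mulVec_smul, smul_dotProduct, dotProduct_smul]
  simp [Complex.mul_re]

noncomputable def CA : ℝ := ∑ i, ∑ j, ‖A i j‖

lemma CA_nonneg : 0 ≤ CA A :=
  Finset.sum_nonneg fun _ _ => Finset.sum_nonneg fun _ _ => norm_nonneg _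

lemma abs_le_one_of_unit {ξ : Fin d → ℂ} (hξ : (∑ i, Complex.normSq (ξ i)) = 1) (k : Fin d) :
    ‖ξ k‖ ≤ 1 := by
  have h1 : Complex.normSq (ξ k) ≤ 1 := by
    rw [← hξ]
    exact Finset.single_le_sum (fun i _ => Complex.normSq_nonneg _) (Finset.mem_univ k)
  have h2 : (‖ξ k‖)^2 ≤ 1 := by rwa [Complex.sq_norm]
  nlinarith [norm_nonneg (ξ k)]

lemma re_dot_le (ξ η : Fin d → ℂ) (hξ : ∀ i, ‖ξ i‖ ≤ 1)
    (hη : ∀ i, ‖η i‖ ≤ 1) :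
    |(A.mulVec ξ ⬝ᵥ η).re| ≤ CA A := by
  calc |(A.mulVec ξ ⬝ᵥ η).re| ≤ ‖A.mulVec ξ ⬝ᵥ η‖ := Complex.abs_re_le_norm _
    _ ≤ ∑ i, ‖A.mulVec ξ i * η i‖ := by
        rw [dotProduct]; exact norm_sum_le _ _
    _ ≤ CA A := by
        apply Finset.sum_le_sum
        intro i _
        rw [norm_mul]
        calc ‖A.mulVec ξ i‖ * ‖η i‖
            ≤ ‖A.mulVec ξ i‖ * 1 :=
              mul_le_mul_of_nonneg_left (hη i) (norm_nonneg _)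
          _ = ‖A.mulVec ξ i‖ := mul_one _
          _ ≤ ∑ j, ‖A i j‖ := by
              rw [Matrix.mulVec, dotProduct]
              refine (norm_sum_le _ _).trans ?_
              apply Finset.sum_le_sum
              intro j _
              rw [norm_mul]
              calc ‖A i j‖ * ‖ξ j‖
                  ≤ ‖A i j‖ * 1 :=
                    mul_le_mul_of_nonneg_left (hξ j) (norm_nonneg _)
                _ = _ := mul_one _

def Sset (p : ℝ) : Set ℝ :=
  { r : ℝ | ∃ ξ : Fin d → ℂ, (∑ i, Complex.normSq (ξ i)) = 1 ∧
    r = fA A ξ + (1 - 2/p) * gA A ξ }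

lemma Delta_eq (p : ℝ) : DeltaConst p A = sInf (Sset A p) := by
  unfold DeltaConst Sset
  congr 1
  ext r
  constructor
  · rintro ⟨ξ, h1, h2⟩; exact ⟨ξ, h1, by rw [h2, val_eq]⟩
  · rintro ⟨ξ, h1, h2⟩; exact ⟨ξ, h1, by rw [h2, val_eq]⟩

lemma t_mem {p : ℝ} (hp : p ∈ Set.Ici (2:ℝ)) : 0 ≤ 1 - 2/p ∧ 1 - 2/p ≤ 1 := by
  have hp2 : (2:ℝ) ≤ p := hp
  have hp0 : (0:ℝ) < p := by linarith
  constructor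
  · have : 2/p ≤ 1 := by rw [div_le_one hp0]; linarith
    linarith
  · have : 0 ≤ 2/p := by positivity
    linarith

lemma bddBelow_S {p : ℝ} (hp : p ∈ Set.Ici (2:ℝ)) : BddBelow (Sset A p) := by
  refine ⟨-(2 * CA A), ?_⟩
  rintro r ⟨ξ, h1, rfl⟩
  have hξ := abs_le_one_of_unit h1
  have hf : |fA A ξ| ≤ CA A := re_dot_le A ξ (star ξ) hξ (by simpa using hξ)
  have hg : |gA A ξ| ≤ CA A := re_dot_le A ξ ξ hξ hξ
  obtain ⟨ht0, ht1⟩ := t_mem hp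
  have : |(1 - 2/p) * gA A ξ| ≤ CA A := by
    rw [abs_mul, abs_of_nonneg ht0]
    calc (1 - 2/p) * |gA A ξ| ≤ 1 * |gA A ξ| :=
        mul_le_mul_of_nonneg_right ht1 (abs_nonneg _)
      _ = |gA A ξ| := one_mul _
      _ ≤ CA A := hg
  have h1' : -(CA A) ≤ fA A ξ := neg_le_of_abs_le hf
  have h2' : -(CA A) ≤ (1 - 2/p) * gA A ξ := neg_le_of_abs_le this
  linarith

lemma nonempty_S [NeZero d] (p : ℝ) : (Sset A p).Nonempty := by
  refine ⟨_, ⟨Pi.single (0 : Fin d) 1, ?_, rfl⟩⟩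
  simp [Pi.single_apply, apply_ite Complex.normSq]

lemma t_mono {p q : ℝ} (hp : p ∈ Set.Ici (2:ℝ)) (hq : q ∈ Set.Ici (2:ℝ)) (hpq : p ≤ q) :
    1 - 2/p ≤ 1 - 2/q := by
  have hp2 : (2:ℝ) ≤ p := hp
  have hp0 : (0:ℝ) < p := by linarith
  have : 2/q ≤ 2/p := by gcongr
  linarith

lemma antitone_key [NeZero d] {p q : ℝ} (hp : p ∈ Set.Ici (2:ℝ)) (hq : q ∈ Set.Ici (2:ℝ))
    (hpq : p ≤ q) : sInf (Sset A q) ≤ sInf (Sset A p) := by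
  refine le_csInf (nonempty_S A p) ?_
  rintro r ⟨ξ, h1, rfl⟩
  by_cases hg : 0 ≤ gA A ξ
  · -- use I • ξ
    have hmem : fA A ξ + (1 - 2/q) * (- gA A ξ) ∈ Sset A q := by
      refine ⟨Complex.I • ξ, by rw [norm_I_smul]; exact h1, ?_⟩
      rw [fA_I_smul, gA_I_smul]
    refine (csInf_le (bddBelow_S A hq) hmem).trans ?_
    have h0p := (t_mem hp).1
    have h0q := (t_mem hq).1
    have htm := t_mono hp hq hpq
    nlinarith
  · have hmem : fA A ξ + (1 - 2/q) * gA A ξ ∈ Sset A q := ⟨ξ, h1, rfl⟩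
    refine (csInf_le (bddBelow_S A hq) hmem).trans ?_
    have h0p := (t_mem hp).1
    have htm := t_mono hp hq hpq
    nlinarith

lemma lipschitz_key [NeZero d] {p q : ℝ} (hp : p ∈ Set.Ici (2:ℝ)) (hq : q ∈ Set.Ici (2:ℝ)) :
    sInf (Sset A p) ≤ sInf (Sset A q) + CA A * |(1 - 2/p) - (1 - 2/q)| := by
  have key : ∀ r ∈ Sset A q, sInf (Sset A p) - CA A * |(1 - 2/p) - (1 - 2/q)| ≤ r := by
    rintro r ⟨ξ, h1, rfl⟩
    have hξ := abs_le_one_of_unit h1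
    have hg : |gA A ξ| ≤ CA A := re_dot_le A ξ ξ hξ hξ
    have hmem : fA A ξ + (1 - 2/p) * gA A ξ ∈ Sset A p := ⟨ξ, h1, rfl⟩
    have h2 := csInf_le (bddBelow_S A hp) hmem
    have h3 : ((1 - 2/p) - (1 - 2/q)) * gA A ξ ≤ CA A * |(1 - 2/p) - (1 - 2/q)| := by
      calc ((1 - 2/p) - (1 - 2/q)) * gA A ξ ≤ |((1 - 2/p) - (1 - 2/q)) * gA A ξ| := le_abs_self _
        _ = |(1 - 2/p) - (1 - 2/q)| * |gA A ξ| := abs_mul _ _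
        _ ≤ |(1 - 2/p) - (1 - 2/q)| * CA A :=
            mul_le_mul_of_nonneg_left hg (abs_nonneg _)
        _ = CA A * |(1 - 2/p) - (1 - 2/q)| := mul_comm _ _
    nlinarith
  have := le_csInf (nonempty_S A q) key
  linarith

lemma t_diff_le {p q : ℝ} (hp : p ∈ Set.Ici (2:ℝ)) (hq : q ∈ Set.Ici (2:ℝ)) :
    |(1 - 2/p) - (1 - 2/q)| ≤ |p - q| := by
  have hp2 : (2:ℝ) ≤ p := hp
  have hq2 : (2:ℝ) ≤ q := hq
  have hp0 : (0:ℝ) < p := by linarith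
  have hq0 : (0:ℝ) < q := by linarith
  have heq : (1 - 2/p) - (1 - 2/q) = 2*(p - q)/(p*q) := by field_simp; ring
  rw [heq, abs_div, abs_of_pos (by positivity : (0:ℝ) < p*q), div_le_iff₀ (by positivity)]
  rw [abs_mul, abs_of_pos (by norm_num : (0:ℝ) < 2)]
  nlinarith [abs_nonneg (p - q), mul_le_mul hp2 hq2 (by norm_num : (0:ℝ) ≤ 2) (by linarith : (0:ℝ) ≤ p)]

end Aux

theorem Delta_antitone_lipschitz {d : ℕ} (A : Matrix (Fin d) (Fin d) ℂ) :
    AntitoneOn (fun p : ℝ => DeltaConst p A) (Set.Ici (2 : ℝ)) ∧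
    ∃ K : NNReal, LipschitzOnWith K (fun p : ℝ => DeltaConst p A) (Set.Ici (2 : ℝ)) := by
  rcases eq_or_ne d 0 with hd | hd
  · subst hd
    have hc : ∀ p : ℝ, DeltaConst p A = 0 := by
      intro p
      unfold DeltaConst
      convert Real.sInf_empty using 2
      rw [Set.eq_empty_iff_forall_notMem]
      rintro r ⟨ξ, h1, _⟩
      simp at h1
    constructor
    · intro a _ b _ _
      simp only [hc, le_refl]
    · refine ⟨0, LipschitzOnWith.of_dist_le_mul ?_⟩
      intro x _ y _
      simp [hc]
  · haveI : NeZero d := ⟨hd⟩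
    constructor
    · intro p hp q hq hpq
      simp only [Delta_eq]
      exact antitone_key A hp hq hpq
    · refine ⟨(CA A).toNNReal, LipschitzOnWith.of_dist_le_mul ?_⟩
      intro p hp q hq
      simp only [Delta_eq]
      have h1 := lipschitz_key A hp hq
      have h2 := lipschitz_key A hq hp
      have h3 := t_diff_le hp hq
      have h4 := t_diff_le hq hp
      have hC := CA_nonneg A
      have hcoe : ((CA A).toNNReal : ℝ) = CA A := Real.coe_toNNReal _ hC
      rw [Real.dist_eq, Real.dist_eq, hcoe, abs_sub_le_iff]
      constructor
      · have : CA A * |(1 - 2/p) - (1 - 2/q)| ≤ CA A * |p - q| :=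
          mul_le_mul_of_nonneg_left h3 hC
        linarith
      · have h5 : CA A * |(1 - 2/q) - (1 - 2/p)| ≤ CA A * |q - p| :=
          mul_le_mul_of_nonneg_left h4 hC
        rw [abs_sub_comm q p] at h5
        linarith
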